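/- Suppose a : Fin T → ℝ and all values a(t) are either 0 or at least ι for some ι ∈ (0,1], and X : Fin T → [0,1], b ∈ ℝ. Then Σ_{t : a(t) > 0} max(0, X(t) − (b − Σ_{r<t} a(r)X(r))⁺ / a(t)) ≤ ι⁻¹ · (Σ_t a(t)X(t) − b)⁺. -/

import Mathlib

theorem stmt_7 (T : ℕ) (ι : ℝ) (hι : ι ∈ Set.Ioc (0:ℝ) 1)
    (a : Fin T → ℝ) (ha : ∀ t, a t = 0 ∨ ι ≤ a t)
    (X : Fin T → ℝ) (hX : ∀ t, X t ∈ Set.Icc (0:ℝ) 1) (b : ℝ) :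
    ∑ t ∈ Finset.univ.filter (fun t => 0 < a t),
        max 0 (X t - max (b - ∑ r ∈ Finset.Iio t, a r * X r) 0 / a t)
      ≤ ι⁻¹ * max (∑ t, a t * X t - b) 0 := by
  obtain ⟨hι0, hι1⟩ := hι
  set a' : ℕ → ℝ := fun i => if h : i < T then a ⟨i, h⟩ * X ⟨i, h⟩ else 0 with ha'
  set g : ℕ → ℝ := fun n => max (∑ i ∈ Finset.range n, a' i - b) 0 with hg
  have ha'nn : ∀ i, 0 ≤ a' i := by
    intro i
    simp only [ha']
    split
    · rename_i h
      rcases ha ⟨i, h⟩ with h0 | h0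
      · simp [h0]
      · exact mul_nonneg (hι0.le.trans h0) (hX _).1
    · exact le_refl 0
  have hmono : ∀ n, g n ≤ g (n + 1) := by
    intro n
    simp only [hg]
    have := ha'nn n
    rw [Finset.sum_range_succ]
    exact max_le_max (by linarith) le_rfl
  have hIio : ∀ t : Fin T, ∑ r ∈ Finset.Iio t, a r * X r = ∑ i ∈ Finset.range (t : ℕ), a' i := by
    intro t
    rw [← Nat.Iio_eq_range, ← Fin.map_valEmbedding_Iio, Finset.sum_map]
    apply Finset.sum_congr rfl
    intro r _
    simp [ha', r.2]
  have hstep : ∀ t : Fin T, 0 < a t →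
      max 0 (X t - max (b - ∑ r ∈ Finset.Iio t, a r * X r) 0 / a t)
        ≤ ι⁻¹ * (g ((t : ℕ) + 1) - g (t : ℕ)) := by
    intro t hat
    have hιa : ι ≤ a t := (ha t).resolve_left (by linarith)
    rw [hIio t]
    set s := ∑ i ∈ Finset.range (t : ℕ), a' i with hs
    set c := a t * X t with hcdef
    have ha't : a' (t : ℕ) = c := by simp [ha', t.2, hcdef]
    have hgs : g ((t : ℕ) + 1) = max (s + c - b) 0 := by
      simp only [hg, Finset.sum_range_succ, ha't, ← hs]
    have hg0 : g (t : ℕ) = max (s - b) 0 := rfl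
    rw [hgs, hg0]
    have hc : 0 ≤ c := mul_nonneg hat.le (hX t).1
    have key : max 0 (c - max (b - s) 0)
        = max (s + c - b) 0 - max (s - b) 0 := by
      rcases le_total s b with h | h
      · have e1 : max (b - s) 0 = b - s := max_eq_left (by linarith)
        have e3 : max (s - b) 0 = 0 := max_eq_right (by linarith)
        rw [e1, e3, sub_zero]
        rcases le_total (s + c) b with h2 | h2
        · rw [max_eq_right (by linarith : s + c - b ≤ 0),
            max_eq_left (by linarith : c - (b - s) ≤ 0)]
        · rw [max_eq_left (by linarith : (0:ℝ) ≤ s + c - b),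
            max_eq_right (by linarith : (0:ℝ) ≤ c - (b - s))]
          ring
      · have e1 : max (b - s) 0 = 0 := max_eq_right (by linarith)
        rw [e1, sub_zero, max_eq_right hc,
          max_eq_left (by linarith : (0:ℝ) ≤ s + c - b),
          max_eq_left (by linarith : (0:ℝ) ≤ s - b)]
        ring
    have hdiv : X t - max (b - s) 0 / a t = (c - max (b - s) 0) / a t := by
      rw [sub_div, hcdef, mul_div_cancel_left₀ _ hat.ne']
    rw [hdiv]
    have hmd : max 0 ((c - max (b - s) 0) / a t)
        = max 0 (c - max (b - s) 0) / a t := by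
      rw [← max_div_div_right hat.le, zero_div]
    rw [hmd, key, ← div_eq_inv_mul]
    have hnn : 0 ≤ max (s + c - b) 0 - max (s - b) 0 := by
      rw [← key]; exact le_max_left _ _
    gcongr
  calc ∑ t ∈ Finset.univ.filter (fun t => 0 < a t),
        max 0 (X t - max (b - ∑ r ∈ Finset.Iio t, a r * X r) 0 / a t)
      ≤ ∑ t ∈ Finset.univ.filter (fun t => 0 < a t), ι⁻¹ * (g ((t : ℕ) + 1) - g (t : ℕ)) := by
        apply Finset.sum_le_sum
        intro t ht
        exact hstep t (Finset.mem_filter.mp ht).2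
    _ ≤ ∑ t : Fin T, ι⁻¹ * (g ((t : ℕ) + 1) - g (t : ℕ)) := by
        apply Finset.sum_le_sum_of_subset_of_nonneg (Finset.filter_subset _ _)
        intro t _ _
        have := hmono (t : ℕ)
        exact mul_nonneg (by positivity) (by linarith)
    _ = ι⁻¹ * (g T - g 0) := by
        rw [← Finset.mul_sum, Fin.sum_univ_eq_sum_range (fun i => g (i + 1) - g i),
          Finset.sum_range_sub]
    _ ≤ ι⁻¹ * g T := by
        have h1 : (0:ℝ) ≤ g 0 := le_max_right _ _
        have h2 : g T - g 0 ≤ g T := by linarith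
        exact mul_le_mul_of_nonneg_left h2 (by positivity)
    _ = ι⁻¹ * max (∑ t, a t * X t - b) 0 := by
        have hsum : ∑ i ∈ Finset.range T, a' i = ∑ t : Fin T, a t * X t := by
          rw [← Fin.sum_univ_eq_sum_range (fun i => a' i) T]
          exact Finset.sum_congr rfl fun i _ => by simp [ha', i.2]
        simp only [hg, hsum]
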